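/- Let k ≥ 2 be even and let a : ℕ → ℝ be a k-periodic real sequence whose monodromy matrix C_k has trace T with |T| < 2. Suppose T = 2 cos(2πm/P) for some integers m and P ≥ 1. Then C_k^P is the identity matrix, and consequently every solution x : ℕ → ℂ of x_{n+2} = a_n x_{n+1} + x_n is kP-periodic: x_{n+kP} = x_n for all n ≥ 0. -/

import Mathlib

/-- The `i`-th Fibonacci matrix of a real sequence, viewed as a complex matrix. -/
def fibMat (a : ℕ → ℝ) (i : ℕ) : Matrix (Fin 2) (Fin 2) ℂ :=
  !![(a i : ℂ), 1; 1, 0]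

/-- The product `C n = A_{n-1} ⋯ A_1 A_0` of Fibonacci matrices. -/
noncomputable def fibProd (a : ℕ → ℝ) : ℕ → Matrix (Fin 2) (Fin 2) ℂ
  | 0 => 1
  | n + 1 => fibMat a n * fibProd a n

lemma mat_mul_self (M : Matrix (Fin 2) (Fin 2) ℂ) :
    M * M = M.trace • M - M.det • 1 := by
  ext i j
  fin_cases i <;> fin_cases j <;>
    simp [Matrix.mul_apply, Fin.sum_univ_two, Matrix.trace_fin_two, Matrix.det_fin_two,
      Matrix.one_apply] <;> ring

lemma fibProd_det (a : ℕ → ℝ) (n : ℕ) : (fibProd a n).det = (-1 : ℂ) ^ n := by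
  induction n with
  | zero => simp [fibProd]
  | succ n ih =>
    rw [show fibProd a (n+1) = fibMat a n * fibProd a n from rfl, Matrix.det_mul, ih]
    simp [fibMat, Matrix.det_fin_two_of]
    ring

lemma fibProd_add (a : ℕ → ℝ) (n m : ℕ) :
    fibProd a (n + m) = fibProd (fun i => a (i + m)) n * fibProd a m := by
  induction n with
  | zero => simp [fibProd]
  | succ n ih =>
    rw [show n + 1 + m = (n + m) + 1 from by omega]
    rw [show fibProd a (n + m + 1) = fibMat a (n + m) * fibProd a (n + m) from rfl, ih,
      show fibProd (fun i => a (i + m)) (n + 1)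
        = fibMat (fun i => a (i + m)) n * fibProd (fun i => a (i + m)) n from rfl,
      mul_assoc]
    rfl

lemma per_mul (a : ℕ → ℝ) (k : ℕ) (ha : ∀ n, a (n + k) = a n) :
    ∀ j i, a (i + k * j) = a i := by
  intro j
  induction j with
  | zero => simp
  | succ j ih =>
    intro i
    rw [show i + k * (j + 1) = (i + k * j) + k from by ring, ha, ih]

lemma fibProd_pow (a : ℕ → ℝ) (k : ℕ) (ha : ∀ n, a (n + k) = a n) (j : ℕ) :
    fibProd a (k * j) = fibProd a k ^ j := by
  induction j with
  | zero => simp [fibProd]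
  | succ j ih =>
    rw [show k * (j + 1) = k + k * j from by ring, fibProd_add,
      show (fun i => a (i + k * j)) = a from funext fun i => per_mul a k ha j i, ih, pow_succ']

theorem even_period_rational_rotation_periodic (k : ℕ) (hk : 2 ≤ k)
    (hkeven : Even k) (a : ℕ → ℝ) (ha : ∀ n, a (n + k) = a n)
    (T : ℝ) (hT : (fibProd a k).trace = (T : ℂ)) (hTsmall : |T| < 2)
    (m : ℤ) (P : ℕ) (hP : 1 ≤ P)
    (hcos : T = 2 * Real.cos (2 * Real.pi * m / P)) :
    fibProd a k ^ P = 1 ∧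
    ∀ x : ℕ → ℂ, (∀ n, x (n + 2) = (a n : ℂ) * x (n + 1) + x n) →
      ∀ n, x (n + k * P) = x n := by
  set C := fibProd a k with hC
  set θ : ℝ := 2 * Real.pi * m / P with hθ
  have hPne : (P : ℝ) ≠ 0 := by positivity
  have hPθ : (P : ℝ) * θ = 2 * Real.pi * m := by rw [hθ]; field_simp
  have hsinP : Real.sin ((P : ℝ) * θ) = 0 := by
    rw [hPθ, show 2 * Real.pi * (m : ℝ) = ((2 * m : ℤ) : ℝ) * Real.pi from by push_cast; ring]
    exact Real.sin_int_mul_pi _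
  have hcosP : Real.cos ((P : ℝ) * θ) = 1 := by
    rw [hPθ, show 2 * Real.pi * (m : ℝ) = (m : ℝ) * (2 * Real.pi) from by ring]
    exact Real.cos_int_mul_two_pi _
  have habs : |Real.cos θ| < 1 := by
    have : |T| = 2 * |Real.cos θ| := by
      rw [hcos, abs_mul]; norm_num
    linarith [this ▸ hTsmall]
  have hsin : Real.sin θ ≠ 0 := by
    intro h
    have h1 := Real.sin_sq_add_cos_sq θ
    have h2 : Real.cos θ ^ 2 < 1 := by
      have := sq_abs (Real.cos θ)
      nlinarith [abs_nonneg (Real.cos θ)]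
    rw [h] at h1
    nlinarith
  have hdet : C.det = 1 := by
    rw [hC, fibProd_det, hkeven.neg_one_pow]
  have hC2 : C * C = (T : ℂ) • C - 1 := by
    rw [mat_mul_self, hT, hdet, one_smul]
  set s : ℕ → ℝ := fun n => Real.sin (n * θ) / Real.sin θ with hs
  have key : ∀ n, C ^ (n + 1) = ((s (n + 1) : ℝ) : ℂ) • C - ((s n : ℝ) : ℂ) • 1 := by
    intro n
    induction n with
    | zero =>
      simp [hs, div_self hsin]
    | succ n ih =>
      have hrec : s (n + 2) = T * s (n + 1) - s n := by
        have e1 : ((n : ℝ) + 2) * θ = ((n : ℝ) + 1) * θ + θ := by ring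
        have e2 : (n : ℝ) * θ = ((n : ℝ) + 1) * θ - θ := by ring
        simp only [hs]
        push_cast
        rw [e1, e2, Real.sin_add, Real.sin_sub, hcos]
        field_simp
        ring
      calc C ^ (n + 2) = C ^ (n + 1) * C := pow_succ C (n + 1)
        _ = (((s (n + 1) : ℝ) : ℂ) • C - ((s n : ℝ) : ℂ) • 1) * C := by rw [ih]
        _ = ((s (n + 1) : ℝ) : ℂ) • (C * C) - ((s n : ℝ) : ℂ) • C := by
            rw [sub_mul, smul_mul_assoc, smul_mul_assoc, one_mul]
        _ = ((s (n + 1) : ℝ) : ℂ) • ((T : ℂ) • C - 1) - ((s n : ℝ) : ℂ) • C := by rw [hC2]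
        _ = ((s (n + 2) : ℝ) : ℂ) • C - ((s (n + 1) : ℝ) : ℂ) • 1 := by
            rw [hrec]; push_cast; module
  obtain ⟨Q, rfl⟩ : ∃ Q, P = Q + 1 := ⟨P - 1, by omega⟩
  have hsP : s (Q + 1) = 0 := by
    simp only [hs]
    rw [show ((Q + 1 : ℕ) : ℝ) = ((Q + 1 : ℕ) : ℝ) from rfl]
    push_cast
    rw [show ((Q : ℝ) + 1) * θ = ((Q + 1 : ℕ) : ℝ) * θ from by push_cast; ring, hsinP, zero_div]
  have hsQ : s Q = -1 := by
    simp only [hs]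
    have e : (Q : ℝ) * θ = ((Q + 1 : ℕ) : ℝ) * θ - θ := by push_cast; ring
    rw [e, Real.sin_sub, hsinP, hcosP]
    field_simp
    ring
  have hCP : C ^ (Q + 1) = 1 := by
    rw [key Q, hsP, hsQ]
    push_cast
    simp
  refine ⟨hCP, ?_⟩
  intro x hx
  have hvec : ∀ n, (fibProd a n).mulVec ![x 1, x 0] = ![x (n + 1), x n] := by
    intro n
    induction n with
    | zero => simp [fibProd]
    | succ n ih =>
      rw [show fibProd a (n + 1) = fibMat a n * fibProd a n from rfl,
        ← Matrix.mulVec_mulVec, ih]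
      funext i
      fin_cases i <;>
        simp [fibMat, Matrix.mulVec, dotProduct, Fin.sum_univ_two, hx n]
  have hfp : fibProd a (k * (Q + 1)) = 1 := by
    rw [fibProd_pow a k ha, ← hC, hCP]
  have hv := hvec (k * (Q + 1))
  rw [hfp, Matrix.one_mulVec] at hv
  have h1 : x (k * (Q + 1) + 1) = x 1 := congrFun hv.symm 0
  have h0 : x (k * (Q + 1)) = x 0 := congrFun hv.symm 1
  have aper : ∀ n, a (n + k * (Q + 1)) = a n := fun n => per_mul a k ha (Q + 1) n
  have main : ∀ n, x (n + k * (Q + 1)) = x n ∧ x (n + 1 + k * (Q + 1)) = x (n + 1) := by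
    intro n
    induction n with
    | zero =>
      constructor
      · rw [zero_add, h0]
      · rw [show 0 + 1 + k * (Q + 1) = k * (Q + 1) + 1 by ring, h1]
    | succ n ih =>
      refine ⟨ih.2, ?_⟩
      rw [show n + 1 + 1 + k * (Q + 1) = (n + k * (Q + 1)) + 2 from by ring, hx, aper,
        show n + k * (Q + 1) + 1 = n + 1 + k * (Q + 1) from by ring, ih.1, ih.2, ← hx]
  exact fun n => (main n).1
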